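/- For the classical complete elliptic integrals (case a = 1/2), the function r ↦ r²·K(r)/(K(r) − E(r)) is strictly decreasing on (0,1), with limit 2 as r → 0⁺ and limit 1 as r → 1⁻. -/

import Mathlib

open Real Filter Set Topology

/-- Pochhammer symbol (rising factorial) for real `x`. -/
noncomputable def poch (x : ℝ) (n : ℕ) : ℝ := (ascPochhammer ℝ n).eval x

/-- Generalized complete elliptic integral of the first kind. -/
noncomputable def Ka (a r : ℝ) : ℝ :=
  (π / 2) * ∑' n : ℕ, (poch a n * poch (1 - a) n / (n.factorial : ℝ) ^ 2) * r ^ (2 * n)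

/-- Generalized complete elliptic integral of the second kind. -/
noncomputable def Ea (a r : ℝ) : ℝ :=
  (π / 2) * ∑' n : ℕ, (poch (a - 1) n * poch (1 - a) n / (n.factorial : ℝ) ^ 2) * r ^ (2 * n)

/-- Generalized Grötzsch ring function. -/
noncomputable def muG (a r : ℝ) : ℝ :=
  π / (2 * Real.sin (π * a)) * (Ka a (Real.sqrt (1 - r ^ 2)) / Ka a r)

/-- Generalized Hersch–Pfluger distortion function. -/
noncomputable def phiHP (a K r : ℝ) : ℝ := Function.invFun (muG a) (muG a r / K)

/-- The function mₐ(r). -/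
noncomputable def mA (a r : ℝ) : ℝ :=
  2 / (π * Real.sin (π * a)) * (1 - r ^ 2) * Ka a (Real.sqrt (1 - r ^ 2)) * Ka a r

/-- Digamma function (as the logarithmic derivative of Γ). -/
noncomputable def psiDG (x : ℝ) : ℝ := deriv (fun t => Real.log (Real.Gamma t)) x

/-- Ramanujan constant R(a). -/
noncomputable def RamanujanR (a : ℝ) : ℝ :=
  -2 * Real.eulerMascheroniConstant - psiDG a - psiDG (1 - a)

namespace CF3
lemma poch_zero (x : ℝ) : poch x 0 = 1 := by simp [poch]
lemma poch_succ (x : ℝ) (n : ℕ) : poch x (n + 1) = poch x n * (x + n) := by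
  simp [poch, ascPochhammer_succ_right]
lemma poch_half_pos (n : ℕ) : 0 < poch (1/2) n := by
  induction n with
  | zero => simp [poch_zero]
  | succ n ih => rw [poch_succ]; exact mul_pos ih (by positivity)
lemma poch_neghalf (n : ℕ) :
    poch (1/2 - 1) (n + 1) * (2 * n + 1) = -poch (1/2) (n + 1) := by
  induction n with
  | zero => simp [poch_succ, poch_zero]; norm_num
  | succ n ih =>
    rw [poch_succ (1/2 - 1) (n + 1), poch_succ (1/2) (n + 1)]
    push_cast at ih ⊢
    linear_combination ((n : ℝ) + 3/2) * ih
lemma abs_poch_neghalf_le (n : ℕ) : |poch (1/2 - 1) n| ≤ poch (1/2) n := by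
  cases n with
  | zero => simp [poch_zero]
  | succ n =>
    have h := poch_neghalf n
    have h1 : (0 : ℝ) < 2 * n + 1 := by positivity
    have hp := poch_half_pos (n + 1)
    have hq : poch (1/2 - 1) (n + 1) = -poch (1/2) (n + 1) / (2 * n + 1) := by
      field_simp; linarith [h]
    rw [hq, abs_div, abs_neg, abs_of_pos hp, abs_of_pos h1, div_le_iff₀ h1]
    nlinarith

/-- coefficients of K -/
noncomputable def aseq (n : ℕ) : ℝ := poch (1/2) n * poch (1/2) n / (n.factorial : ℝ) ^ 2
/-- coefficients of K - E -/
noncomputable def cseq (n : ℕ) : ℝ :=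
  (poch (1/2) n - poch (1/2 - 1) n) * poch (1/2) n / (n.factorial : ℝ) ^ 2
/-- coefficients of r^2 K -/
noncomputable def nseq : ℕ → ℝ
  | 0 => 0
  | n + 1 => aseq n

lemma fact_pos (n : ℕ) : (0 : ℝ) < (n.factorial : ℝ) := by
  exact_mod_cast n.factorial_pos

lemma aseq_pos (n : ℕ) : 0 < aseq n := by
  have := poch_half_pos n; have := fact_pos n; unfold aseq; positivity

lemma aseq_zero : aseq 0 = 1 := by simp [aseq, poch_zero]

lemma cseq_zero : cseq 0 = 0 := by simp [cseq, poch_zero]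

lemma aseq_succ (n : ℕ) :
    aseq (n + 1) * (2 * n + 2) ^ 2 = aseq n * (2 * n + 1) ^ 2 := by
  have hf := fact_pos n
  have hn1 : ((n : ℝ) + 1) ≠ 0 := by positivity
  unfold aseq
  rw [poch_succ, Nat.factorial_succ]
  push_cast
  field_simp
  ring

lemma cseq_succ (n : ℕ) :
    cseq (n + 1) * (2 * n + 1) = aseq (n + 1) * (2 * n + 2) := by
  have hf := fact_pos (n + 1)
  have h := poch_neghalf n
  have hf2 : (((n + 1).factorial : ℝ) ^ 2) ≠ 0 := by positivity
  unfold cseq aseq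
  rw [div_mul_eq_mul_div, div_mul_eq_mul_div, div_eq_div_iff hf2 hf2]
  linear_combination (-(poch (1/2) (n+1)) * (((n + 1).factorial : ℝ) ^ 2)) * h

lemma nseq_ratio (n : ℕ) :
    nseq (n + 1) * (2 * n + 1) = cseq (n + 1) * (2 * n + 2) := by
  have h1 := aseq_succ n
  have h2 := cseq_succ n
  have hpos : (0 : ℝ) < 2 * n + 1 := by positivity
  have key : nseq (n + 1) * (2 * n + 1) * (2 * n + 1) = cseq (n + 1) * (2 * n + 2) * (2 * n + 1) := by
    show aseq n * (2 * n + 1) * (2 * n + 1) = _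
    nlinarith [h1, h2]
  exact mul_right_cancel₀ (ne_of_gt hpos) key

lemma cseq_pos (n : ℕ) : 0 < cseq (n + 1) := by
  have h := cseq_succ n
  nlinarith [aseq_pos (n + 1)]

lemma cseq_nonneg (n : ℕ) : 0 ≤ cseq n := by
  cases n with
  | zero => simp [cseq_zero]
  | succ n => exact (cseq_pos n).le

lemma nseq_nonneg (n : ℕ) : 0 ≤ nseq n := by
  cases n with
  | zero => simp [nseq]
  | succ n => exact (aseq_pos n).le

lemma aseq_antitone (n : ℕ) : aseq (n + 1) ≤ aseq n := by
  have h := aseq_succ n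
  have h2 : (0:ℝ) < (2*(n:ℝ)+2)^2 := by positivity
  rw [← mul_le_mul_iff_of_pos_right h2, h]
  have := aseq_pos n
  nlinarith [mul_nonneg (aseq_pos n).le (show (0:ℝ) ≤ 4*(n:ℝ)+3 by positivity)]

lemma aseq_le_one (n : ℕ) : aseq n ≤ 1 := by
  induction n with
  | zero => simp [aseq_zero]
  | succ n ih => exact (aseq_antitone n).trans ih

lemma nseq_le_one (n : ℕ) : nseq n ≤ 1 := by
  cases n with
  | zero => simp [nseq]
  | succ n => exact aseq_le_one n

lemma cseq_le_two (n : ℕ) : cseq n ≤ 2 * aseq n := by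
  cases n with
  | zero => simp [cseq_zero]; nlinarith [aseq_pos 0]
  | succ n =>
    have h := cseq_succ n
    nlinarith [aseq_pos (n + 1), cseq_pos n]

lemma cseq_le_nseq (n : ℕ) : cseq n ≤ nseq n := by
  cases n with
  | zero => simp [cseq_zero, nseq]
  | succ n =>
    have h := nseq_ratio n
    nlinarith [cseq_pos n]

/-- strict coefficient-ratio inequality -/
lemma coef_strict {k l : ℕ} (h : k < l) :
    nseq (l + 1) * cseq (k + 1) < nseq (k + 1) * cseq (l + 1) := by
  have h1 := nseq_ratio k
  have h2 := nseq_ratio l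
  have hkl : (k : ℝ) < l := by exact_mod_cast h
  have h2k : (0:ℝ) < 2 * k + 1 := by positivity
  have h2l : (0:ℝ) < 2 * l + 1 := by positivity
  rw [← mul_lt_mul_iff_of_pos_right (mul_pos h2k h2l)]
  calc nseq (l+1) * cseq (k+1) * ((2*k+1)*(2*l+1))
      = (nseq (l+1) * (2*l+1)) * (cseq (k+1) * (2*k+1)) := by ring
    _ = (cseq (l+1) * (2*l+2)) * (cseq (k+1) * (2*k+1)) := by rw [h2]
    _ < (cseq (k+1) * (2*k+2)) * (cseq (l+1) * (2*l+1)) := by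
        nlinarith [cseq_pos k, cseq_pos l, mul_pos (cseq_pos k) (cseq_pos l)]
    _ = (nseq (k+1) * (2*k+1)) * (cseq (l+1) * (2*l+1)) := by rw [h1]
    _ = nseq (k+1) * cseq (l+1) * ((2*k+1)*(2*l+1)) := by ring

lemma coef_le {m n : ℕ} (h : m < n) : nseq n * cseq m ≤ nseq m * cseq n := by
  cases m with
  | zero => simp [cseq_zero, nseq]
  | succ k =>
    obtain ⟨l, rfl⟩ : ∃ l, n = l + 1 := ⟨n - 1, by omega⟩
    exact (coef_strict (by omega)).le

lemma aseq_upper (k : ℕ) : aseq (k + 1) * (2 * k + 3) ≤ 3 / 4 := by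
  induction k with
  | zero =>
    have : aseq 1 = 1 / 4 := by
      simp [aseq, poch_succ, poch_zero]; norm_num
    rw [this]; norm_num
  | succ k ih =>
    have h := aseq_succ (k + 1)
    have hp := aseq_pos (k + 2)
    push_cast at h ih ⊢
    nlinarith

lemma aseq_lower (k : ℕ) : 1 / 4 ≤ aseq (k + 1) * (k + 1) := by
  induction k with
  | zero =>
    have : aseq 1 = 1 / 4 := by
      simp [aseq, poch_succ, poch_zero]; norm_num
    rw [this]; norm_num
  | succ k ih =>
    have h := aseq_succ (k + 1)
    have hp := aseq_pos (k + 2)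
    push_cast at h ih ⊢
    nlinarith

lemma cseq_lower (n : ℕ) : 1 / (4 * (n : ℝ)) ≤ cseq n := by
  cases n with
  | zero => simp [cseq_zero]
  | succ k =>
    have h := cseq_succ k
    have hl := aseq_lower k
    have hp := aseq_pos (k + 1)
    have hk1 : (0:ℝ) < (k:ℝ) + 1 := by positivity
    rw [div_le_iff₀ (by positivity)]
    push_cast at *
    nlinarith

lemma ecoef_nonneg (n : ℕ) : 0 ≤ nseq n - cseq n := sub_nonneg.2 (cseq_le_nseq n)

lemma ecoef_le (n : ℕ) : nseq n - cseq n ≤ 1 / (n : ℝ) ^ 2 := by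
  cases n with
  | zero => simp [cseq_zero, nseq]
  | succ k =>
    have h1 := aseq_succ k
    have h2 := cseq_succ k
    have h3 := aseq_upper k
    have hp := aseq_pos (k + 1)
    have hk1 : (0:ℝ) < ((k:ℝ) + 1) ^ 2 := by positivity
    rw [le_div_iff₀ (by push_cast; exact hk1)]
    show (aseq k - cseq (k + 1)) * _ ≤ 1
    -- (aseq k - cseq (k+1)) * (2k+1)^2 = aseq (k+1) * (2k+2)
    have key : (aseq k - cseq (k + 1)) * (2 * (k:ℝ) + 1) ^ 2 = aseq (k + 1) * (2 * k + 2) := by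
      nlinarith [h1, h2]
    push_cast
    nlinarith [key, h3, mul_le_mul_of_nonneg_right h3
      (show (0:ℝ) ≤ (2*(k:ℝ)+2) * ((k:ℝ)+1)^2 by positivity), hp]

/-! ### series -/

noncomputable def KK (r : ℝ) : ℝ := ∑' n : ℕ, aseq n * r ^ (2 * n)
noncomputable def DD (r : ℝ) : ℝ := ∑' n : ℕ, cseq n * r ^ (2 * n)
noncomputable def NN (r : ℝ) : ℝ := ∑' n : ℕ, nseq n * r ^ (2 * n)

lemma summable_aux {u : ℕ → ℝ} (hu : ∀ n, |u n| ≤ 2) {r : ℝ} (h0 : 0 ≤ r) (h1 : r < 1) :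
    Summable (fun n => u n * r ^ (2 * n)) := by
  have hr2 : r ^ 2 < 1 := by nlinarith
  refine Summable.of_norm_bounded
    ((summable_geometric_of_lt_one (by positivity) hr2).mul_left 2) ?_
  intro n
  rw [Real.norm_eq_abs, abs_mul, pow_mul, abs_pow, abs_of_nonneg (by positivity : (0:ℝ) ≤ r ^ 2)]
  exact mul_le_mul_of_nonneg_right (hu n) (by positivity)

lemma sum_a {r : ℝ} (h0 : 0 ≤ r) (h1 : r < 1) : Summable (fun n => aseq n * r ^ (2 * n)) :=
  summable_aux (fun n => by rw [abs_of_pos (aseq_pos n)]; linarith [aseq_le_one n]) h0 h1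

lemma sum_c {r : ℝ} (h0 : 0 ≤ r) (h1 : r < 1) : Summable (fun n => cseq n * r ^ (2 * n)) :=
  summable_aux (fun n => by
    rw [abs_of_nonneg (cseq_nonneg n)]
    linarith [cseq_le_two n, aseq_le_one n, aseq_pos n]) h0 h1

lemma sum_n {r : ℝ} (h0 : 0 ≤ r) (h1 : r < 1) : Summable (fun n => nseq n * r ^ (2 * n)) :=
  summable_aux (fun n => by
    rw [abs_of_nonneg (nseq_nonneg n)]; linarith [nseq_le_one n]) h0 h1

lemma sum_eE {r : ℝ} (h0 : 0 ≤ r) (h1 : r < 1) :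
    Summable (fun n => (poch (1/2 - 1) n * poch (1/2) n / (n.factorial : ℝ) ^ 2) * r ^ (2 * n)) :=
  summable_aux (fun n => by
    have hf := fact_pos n
    have h := abs_poch_neghalf_le n
    have hp := poch_half_pos n
    rw [abs_div, abs_mul, abs_of_pos hp, abs_of_pos (by positivity : (0:ℝ) < (n.factorial:ℝ)^2)]
    rw [div_le_iff₀ (by positivity)]
    calc |poch (1/2 - 1) n| * poch (1/2) n ≤ poch (1/2) n * poch (1/2) n :=
          mul_le_mul_of_nonneg_right h hp.le
      _ ≤ 1 * ((n.factorial:ℝ)^2) := by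
          have := aseq_le_one n
          unfold aseq at this
          rw [div_le_one (by positivity)] at this
          linarith
      _ ≤ 2 * (n.factorial:ℝ)^2 := by nlinarith) h0 h1

lemma Ka_eq (r : ℝ) : Ka (1/2) r = π / 2 * KK r := by
  unfold Ka KK
  congr 1
  apply tsum_congr
  intro n
  have : (1 : ℝ) - 1/2 = 1/2 := by norm_num
  rw [this]
  rfl

lemma Ea_eq (r : ℝ) : Ea (1/2) r =
    π / 2 * ∑' n : ℕ, (poch (1/2 - 1) n * poch (1/2) n / (n.factorial : ℝ) ^ 2) * r ^ (2 * n) := by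
  unfold Ea
  congr 1
  apply tsum_congr
  intro n
  have : (1 : ℝ) - 1/2 = 1/2 := by norm_num
  rw [this]

lemma KE_eq {r : ℝ} (h0 : 0 ≤ r) (h1 : r < 1) :
    Ka (1/2) r - Ea (1/2) r = π / 2 * DD r := by
  rw [Ka_eq, Ea_eq, ← mul_sub]
  congr 1
  rw [KK, DD, ← Summable.tsum_sub (sum_a h0 h1) (sum_eE h0 h1)]
  apply tsum_congr
  intro n
  unfold aseq cseq
  ring

lemma NN_eq {r : ℝ} (h0 : 0 ≤ r) (h1 : r < 1) : r ^ 2 * KK r = NN r := by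
  rw [NN, Summable.tsum_eq_zero_add (sum_n h0 h1)]
  show _ = nseq 0 * r ^ (2 * 0) + _
  simp only [nseq, mul_zero, pow_zero, zero_mul, zero_add]
  rw [KK, ← tsum_mul_left]
  apply tsum_congr
  intro n
  show r ^ 2 * (aseq n * r ^ (2 * n)) = aseq n * r ^ (2 * (n + 1))
  ring

lemma DD_pos {r : ℝ} (h0 : 0 < r) (h1 : r < 1) : 0 < DD r := by
  refine Summable.tsum_pos (sum_c h0.le h1) (fun n => mul_nonneg (cseq_nonneg n) (by positivity)) 1 ?_
  exact mul_pos (cseq_pos 0) (by positivity)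

lemma NN_nonneg {r : ℝ} (h0 : 0 ≤ r) : 0 ≤ NN r :=
  tsum_nonneg (fun n => mul_nonneg (nseq_nonneg n) (by positivity))

/-! ### monotonicity -/

lemma pow_factor_le {x y : ℝ} (h0 : 0 ≤ x) (hxy : x ≤ y) {m n : ℕ} (h : m < n) :
    x ^ (2 * n) * y ^ (2 * m) ≤ x ^ (2 * m) * y ^ (2 * n) := by
  obtain ⟨d, rfl⟩ : ∃ d, n = m + (d + 1) := ⟨n - m - 1, by omega⟩
  have hy0 : 0 ≤ y := h0.trans hxy
  have e1 : x ^ (2 * (m + (d+1))) * y ^ (2 * m) = (x ^ (2*m) * y ^ (2*m)) * x ^ (2*(d+1)) := by ring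
  have e2 : x ^ (2 * m) * y ^ (2 * (m + (d+1))) = (x ^ (2*m) * y ^ (2*m)) * y ^ (2*(d+1)) := by ring
  rw [e1, e2]
  exact mul_le_mul_of_nonneg_left (pow_le_pow_left₀ h0 hxy _) (by positivity)

set_option maxHeartbeats 2000000 in
lemma prod_lt {x y : ℝ} (hx : 0 < x) (hxy : x < y) (hy : y < 1) :
    NN y * DD x < NN x * DD y := by
  have hx1 : x < 1 := hxy.trans hy
  have hy0 : (0:ℝ) < y := hx.trans hxy
  have Snx := sum_n hx.le hx1
  have Sny := sum_n hy0.le hy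
  have Scx := sum_c hx.le hx1
  have Scy := sum_c hy0.le hy
  set F : ℕ × ℕ → ℝ := fun p =>
    nseq p.1 * cseq p.2 * (x ^ (2 * p.1) * y ^ (2 * p.2) - y ^ (2 * p.1) * x ^ (2 * p.2)) with hF
  have nnx : ∀ n : ℕ, 0 ≤ nseq n * x ^ (2*n) := fun n => mul_nonneg (nseq_nonneg n) (by positivity)
  have nny : ∀ n : ℕ, 0 ≤ nseq n * y ^ (2*n) := fun n => mul_nonneg (nseq_nonneg n) (by positivity)
  have ncx : ∀ n : ℕ, 0 ≤ cseq n * x ^ (2*n) := fun n => mul_nonneg (cseq_nonneg n) (by positivity)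
  have ncy : ∀ n : ℕ, 0 ≤ cseq n * y ^ (2*n) := fun n => mul_nonneg (cseq_nonneg n) (by positivity)
  have S1 : Summable (fun p : ℕ × ℕ => (nseq p.1 * x ^ (2 * p.1)) * (cseq p.2 * y ^ (2 * p.2))) :=
    Snx.mul_of_nonneg Scy nnx ncy
  have S2 : Summable (fun p : ℕ × ℕ => (nseq p.1 * y ^ (2 * p.1)) * (cseq p.2 * x ^ (2 * p.2))) :=
    Sny.mul_of_nonneg Scx nny ncx
  have hFeq : F = fun p : ℕ × ℕ =>
      (nseq p.1 * x ^ (2 * p.1)) * (cseq p.2 * y ^ (2 * p.2))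
      - (nseq p.1 * y ^ (2 * p.1)) * (cseq p.2 * x ^ (2 * p.2)) := by
    funext p; simp only [hF]; ring
  have hFsum : Summable F := by rw [hFeq]; exact S1.sub S2
  have hTS : ∑' p, F p = NN x * DD y - NN y * DD x := by
    rw [hFeq, Summable.tsum_sub S1 S2, ← Summable.tsum_mul_tsum Snx Scy S1, ← Summable.tsum_mul_tsum Sny Scx S2]
    rfl
  have hswap : ∑' p, F (Prod.swap p) = ∑' p, F p := (Equiv.prodComm ℕ ℕ).tsum_eq F
  have hFswap : Summable fun p => F (Prod.swap p) :=
    (Equiv.prodComm ℕ ℕ).summable_iff.2 hFsum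
  have hG : ∀ p : ℕ × ℕ, 0 ≤ F p + F (Prod.swap p) := by
    rintro ⟨m, n⟩
    have hGe : F (m, n) + F (Prod.swap (m, n)) =
        (nseq m * cseq n - nseq n * cseq m) * (x ^ (2*m) * y ^ (2*n) - x ^ (2*n) * y ^ (2*m)) := by
      simp only [hF, Prod.swap_prod_mk]; ring
    rw [hGe]
    rcases lt_trichotomy m n with h | h | h
    · exact mul_nonneg (sub_nonneg.2 (coef_le h)) (sub_nonneg.2 (pow_factor_le hx.le hxy.le h))
    · subst h; simp
    · have h1 := sub_nonpos.2 (coef_le h)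
      have h2 := sub_nonpos.2 (pow_factor_le hx.le hxy.le h)
      nlinarith
  have hGpos : 0 < F (1, 2) + F (Prod.swap (1, 2)) := by
    have hGe : F (1, 2) + F (Prod.swap (1, 2)) =
        (nseq 1 * cseq 2 - nseq 2 * cseq 1) * (x ^ 2 * y ^ 4 - x ^ 4 * y ^ 2) := by
      simp only [hF, Prod.swap_prod_mk]; norm_num; ring
    rw [hGe]
    have h1 : nseq 2 * cseq 1 < nseq 1 * cseq 2 := coef_strict (show 0 < 1 by norm_num)
    have h2 : x ^ 2 * y ^ 4 - x ^ 4 * y ^ 2 = x^2 * y^2 * ((y - x) * (y + x)) := by ring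
    apply mul_pos (by linarith)
    rw [h2]
    exact mul_pos (mul_pos (pow_pos hx 2) (pow_pos hy0 2))
      (mul_pos (sub_pos.2 hxy) (by positivity))
  have hsum2 : 0 < ∑' p : ℕ × ℕ, (F p + F (Prod.swap p)) :=
    Summable.tsum_pos (hFsum.add hFswap) hG (1, 2) hGpos
  rw [Summable.tsum_add hFsum hFswap, hswap] at hsum2
  have : 0 < ∑' p, F p := by linarith
  rw [hTS] at this
  linarith

/-! ### evaluation of f -/

lemma f_eval {r : ℝ} (h0 : 0 < r) (h1 : r < 1) :
    r ^ 2 * Ka (1/2) r / (Ka (1/2) r - Ea (1/2) r) = NN r / DD r := by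
  rw [KE_eq h0.le h1, Ka_eq]
  have h2 : r ^ 2 * (π / 2 * KK r) = π / 2 * NN r := by rw [← NN_eq h0.le h1]; ring
  rw [h2, mul_div_mul_left _ _ (by positivity : (π / 2 : ℝ) ≠ 0)]

lemma part_mono :
    StrictAntiOn (fun r : ℝ => r ^ 2 * Ka (1/2) r / (Ka (1/2) r - Ea (1/2) r)) (Set.Ioo 0 1) := by
  intro x hx y hy hxy
  show y ^ 2 * Ka (1/2) y / (Ka (1/2) y - Ea (1/2) y) <
    x ^ 2 * Ka (1/2) x / (Ka (1/2) x - Ea (1/2) x)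
  rw [f_eval hy.1 hy.2, f_eval hx.1 hx.2,
    div_lt_div_iff₀ (DD_pos hy.1 hy.2) (DD_pos hx.1 hx.2)]
  exact prod_lt hx.1 hxy hy.2

/-! ### limit at 0 -/

lemma cseq_one : cseq 1 = 1 / 2 := by
  norm_num [cseq, poch_succ, poch_zero]

lemma KK_ge {r : ℝ} (h0 : 0 ≤ r) (h1 : r < 1) : 1 ≤ KK r := by
  have h := Summable.le_tsum (sum_a h0 h1) 0
    (fun j _ => mul_nonneg (aseq_pos j).le (by positivity))
  simpa [aseq_zero, KK] using h

lemma geom_tail1 {r : ℝ} (h0 : 0 ≤ r) (h1 : r < 1) :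
    ∑' n : ℕ, (r ^ 2) ^ (n + 1) = r ^ 2 * (1 - r ^ 2)⁻¹ := by
  have hr2 : r ^ 2 < 1 := by nlinarith
  rw [tsum_congr (fun n => by ring : ∀ n : ℕ, (r^2)^(n+1) = r^2 * (r^2)^n),
    tsum_mul_left, tsum_geometric_of_lt_one (by positivity) hr2]

lemma geom_tail2 {r : ℝ} (h0 : 0 ≤ r) (h1 : r < 1) :
    ∑' n : ℕ, (r ^ 2) ^ (n + 2) = (r ^ 2) ^ 2 * (1 - r ^ 2)⁻¹ := by
  have hr2 : r ^ 2 < 1 := by nlinarith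
  rw [tsum_congr (fun n => by ring : ∀ n : ℕ, (r^2)^(n+2) = (r^2)^2 * (r^2)^n),
    tsum_mul_left, tsum_geometric_of_lt_one (by positivity) hr2]

lemma sgeom {r : ℝ} (h0 : 0 ≤ r) (h1 : r < 1) : Summable (fun n : ℕ => (r ^ 2) ^ n) :=
  summable_geometric_of_lt_one (by positivity) (by nlinarith)

lemma KK_le {r : ℝ} (h0 : 0 ≤ r) (h1 : r < 1) : KK r ≤ 1 + r ^ 2 * (1 - r ^ 2)⁻¹ := by
  have hs := sum_a h0 h1
  rw [KK, Summable.tsum_eq_zero_add hs]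
  have h0t : aseq 0 * r ^ (2 * 0) = 1 := by simp [aseq_zero]
  rw [h0t]
  have hs1 : Summable (fun n : ℕ => aseq (n + 1) * r ^ (2 * (n + 1))) :=
    hs.comp_injective Nat.succ_injective
  have hg1 : Summable (fun n : ℕ => (r ^ 2) ^ (n + 1)) :=
    (sgeom h0 h1).comp_injective Nat.succ_injective
  have htail : ∑' n : ℕ, aseq (n + 1) * r ^ (2 * (n + 1)) ≤ ∑' n : ℕ, (r ^ 2) ^ (n + 1) := by
    apply Summable.tsum_le_tsum _ hs1 hg1
    intro n
    rw [pow_mul]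
    exact mul_le_of_le_one_left (by positivity) (aseq_le_one (n + 1))
  rw [geom_tail1 h0 h1] at htail
  linarith

lemma DD_ge {r : ℝ} (h0 : 0 ≤ r) (h1 : r < 1) : 1 / 2 * r ^ 2 ≤ DD r := by
  have h := Summable.le_tsum (sum_c h0 h1) 1
    (fun j _ => mul_nonneg (cseq_nonneg j) (by positivity))
  rw [cseq_one] at h
  calc 1/2 * r^2 = 1/2 * r^(2*1) := by norm_num
    _ ≤ DD r := h

lemma DD_le {r : ℝ} (h0 : 0 ≤ r) (h1 : r < 1) :
    DD r ≤ 1 / 2 * r ^ 2 + 2 * (r ^ 2) ^ 2 * (1 - r ^ 2)⁻¹ := by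
  have hs := sum_c h0 h1
  have hs1 : Summable (fun n : ℕ => cseq (n + 1) * r ^ (2 * (n + 1))) :=
    hs.comp_injective Nat.succ_injective
  have hs2 : Summable (fun n : ℕ => cseq (n + 1 + 1) * r ^ (2 * (n + 1 + 1))) :=
    hs1.comp_injective Nat.succ_injective
  have hg2 : Summable (fun n : ℕ => (r ^ 2) ^ (n + 2)) :=
    ((sgeom h0 h1).comp_injective Nat.succ_injective :
      Summable (fun n : ℕ => (r ^ 2) ^ (n + 1))).comp_injective Nat.succ_injective
  rw [DD, Summable.tsum_eq_zero_add hs]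
  have h0t : cseq 0 * r ^ (2 * 0) = 0 := by simp [cseq_zero]
  rw [h0t, zero_add]
  rw [Summable.tsum_eq_zero_add hs1]
  have h1t : cseq (0 + 1) * r ^ (2 * (0 + 1)) = 1/2 * r^2 := by
    norm_num [cseq_one]
  rw [h1t]
  have htail : ∑' n : ℕ, cseq (n + 1 + 1) * r ^ (2 * (n + 1 + 1)) ≤ ∑' n : ℕ, 2 * (r ^ 2) ^ (n + 2) := by
    apply Summable.tsum_le_tsum _ hs2 (hg2.mul_left 2)
    intro n
    have : (2 : ℕ) * (n + 1 + 1) = 2 * (n + 2) := by ring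
    rw [this, pow_mul]
    apply mul_le_mul_of_nonneg_right _ (by positivity)
    calc cseq (n + 2) ≤ 2 * aseq (n + 2) := cseq_le_two (n + 2)
      _ ≤ 2 := by nlinarith [aseq_le_one (n + 2), aseq_pos (n + 2)]
  rw [tsum_mul_left, geom_tail2 h0 h1] at htail
  linarith

lemma lim_zero :
    Tendsto (fun r : ℝ => r ^ 2 * Ka (1/2) r / (Ka (1/2) r - Ea (1/2) r))
      (𝓝[>] (0:ℝ)) (𝓝 2) := by
  have hmem : Ioo (0:ℝ) 1 ∈ 𝓝[>] (0:ℝ) := Ioo_mem_nhdsGT_of_mem ⟨le_refl 0, one_pos⟩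
  have hKK : Tendsto KK (𝓝[>] (0:ℝ)) (𝓝 1) := by
    have h1c : ContinuousAt (fun r : ℝ => (1 - r ^ 2)) 0 := by fun_prop
    have h2c : ContinuousAt (fun r : ℝ => (1 - r ^ 2)⁻¹) 0 := h1c.inv₀ (by norm_num)
    have h3c : ContinuousAt (fun r : ℝ => r ^ 2) 0 := by fun_prop
    have hc : ContinuousAt (fun r : ℝ => 1 + r ^ 2 * (1 - r ^ 2)⁻¹) 0 :=
      continuousAt_const.add (h3c.mul h2c)
    have hup : Tendsto (fun r : ℝ => 1 + r ^ 2 * (1 - r ^ 2)⁻¹) (𝓝[>] (0:ℝ)) (𝓝 1) := by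
      have h := tendsto_nhdsWithin_of_tendsto_nhds (s := Set.Ioi (0:ℝ)) hc.tendsto
      norm_num at h
      exact h
    apply tendsto_of_tendsto_of_tendsto_of_le_of_le' tendsto_const_nhds hup
    · filter_upwards [hmem] with r hr using KK_ge hr.1.le hr.2
    · filter_upwards [hmem] with r hr using KK_le hr.1.le hr.2
  have hDD : Tendsto (fun r : ℝ => DD r / r ^ 2) (𝓝[>] (0:ℝ)) (𝓝 (1/2)) := by
    have h1c : ContinuousAt (fun r : ℝ => (1 - r ^ 2)) 0 := by fun_prop
    have h2c : ContinuousAt (fun r : ℝ => (1 - r ^ 2)⁻¹) 0 := h1c.inv₀ (by norm_num)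
    have h3c : ContinuousAt (fun r : ℝ => 2 * r ^ 2) 0 := by fun_prop
    have hc : ContinuousAt (fun r : ℝ => 1/2 + 2 * r ^ 2 * (1 - r ^ 2)⁻¹) 0 :=
      continuousAt_const.add (h3c.mul h2c)
    have hup : Tendsto (fun r : ℝ => 1/2 + 2 * r ^ 2 * (1 - r ^ 2)⁻¹) (𝓝[>] (0:ℝ)) (𝓝 (1/2)) := by
      have h := tendsto_nhdsWithin_of_tendsto_nhds (s := Set.Ioi (0:ℝ)) hc.tendsto
      norm_num at h
      exact h
    apply tendsto_of_tendsto_of_tendsto_of_le_of_le' tendsto_const_nhds hup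
    · filter_upwards [hmem] with r hr
      rw [le_div_iff₀ (pow_pos hr.1 2)]
      exact DD_ge hr.1.le hr.2
    · filter_upwards [hmem] with r hr
      rw [div_le_iff₀ (pow_pos hr.1 2)]
      calc DD r ≤ 1/2 * r^2 + 2 * (r^2)^2 * (1 - r^2)⁻¹ := DD_le hr.1.le hr.2
        _ = (1/2 + 2 * r^2 * (1 - r^2)⁻¹) * r^2 := by ring
  have key : Tendsto (fun r : ℝ => KK r / (DD r / r ^ 2)) (𝓝[>] (0:ℝ)) (𝓝 (1 / (1/2))) :=
    hKK.div hDD (by norm_num)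
  norm_num at key
  apply key.congr'
  filter_upwards [hmem] with r hr
  rw [f_eval hr.1 hr.2, ← NN_eq hr.1.le hr.2, div_div_eq_mul_div]
  ring

/-! ### limit at 1 -/

lemma hMsum : Summable (fun n : ℕ => nseq n - cseq n) := by
  apply Summable.of_nonneg_of_le ecoef_nonneg ecoef_le
  exact summable_one_div_nat_pow.2 one_lt_two

lemma NN_sub_DD_le {r : ℝ} (h0 : 0 ≤ r) (h1 : r < 1) :
    NN r - DD r ≤ ∑' n : ℕ, (nseq n - cseq n) := by
  rw [NN, DD, ← Summable.tsum_sub (sum_n h0 h1) (sum_c h0 h1)]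
  apply Summable.tsum_le_tsum _ ((sum_n h0 h1).sub (sum_c h0 h1)) hMsum
  intro n
  have hp1 : r ^ (2 * n) ≤ 1 := pow_le_one₀ h0 h1.le
  nlinarith [ecoef_nonneg n, pow_nonneg h0 (2 * n)]

lemma DD_le_NN {r : ℝ} (h0 : 0 ≤ r) (h1 : r < 1) : DD r ≤ NN r := by
  apply Summable.tsum_le_tsum _ (sum_c h0 h1) (sum_n h0 h1)
  intro n
  exact mul_le_mul_of_nonneg_right (cseq_le_nseq n) (by positivity)

lemma DD_atTop : Tendsto DD (𝓝[<] (1:ℝ)) atTop := by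
  rw [tendsto_atTop]
  intro C
  have hnotsum : ¬ Summable cseq := by
    intro h
    have h4 : Summable (fun n : ℕ => 1 / (4 * (n:ℝ))) :=
      h.of_nonneg_of_le (fun n => div_nonneg one_pos.le (by positivity)) cseq_lower
    have h5 := h4.mul_left 4
    apply Real.not_summable_one_div_natCast
    have he : (fun n : ℕ => (1:ℝ) / n) = fun n : ℕ => 4 * (1 / (4 * (n:ℝ))) := by
      funext n
      rcases eq_or_ne ((n:ℝ)) 0 with h | h
      · simp [h]
      · field_simp
    rw [he]
    exact h5
  have hps := (not_summable_iff_tendsto_nat_atTop_of_nonneg cseq_nonneg).1 hnotsum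
  obtain ⟨K, hK⟩ := (hps.eventually_ge_atTop (C + 1)).exists
  have hcont : Tendsto (fun r : ℝ => ∑ n ∈ Finset.range K, cseq n * r ^ (2 * n))
      (𝓝[<] (1:ℝ)) (𝓝 (∑ n ∈ Finset.range K, cseq n * (1:ℝ) ^ (2 * n))) :=
    ((continuous_finset_sum _ (fun i _ => by fun_prop)).tendsto 1).mono_left nhdsWithin_le_nhds
  simp only [one_pow, mul_one] at hcont
  have h1 : ∀ᶠ r in 𝓝[<] (1:ℝ), C < ∑ n ∈ Finset.range K, cseq n * r ^ (2 * n) :=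
    hcont (Ioi_mem_nhds (by linarith))
  have h2 : Ioo (0:ℝ) 1 ∈ 𝓝[<] (1:ℝ) := Ioo_mem_nhdsLT_of_mem ⟨one_pos, le_refl 1⟩
  filter_upwards [h1, h2] with r hr hr'
  have hle := Summable.sum_le_tsum (Finset.range K)
    (fun i _ => mul_nonneg (cseq_nonneg i) (pow_nonneg hr'.1.le _)) (sum_c hr'.1.le hr'.2)
  exact le_of_lt (lt_of_lt_of_le hr hle)

lemma lim_one :
    Tendsto (fun r : ℝ => r ^ 2 * Ka (1/2) r / (Ka (1/2) r - Ea (1/2) r))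
      (𝓝[<] (1:ℝ)) (𝓝 1) := by
  set M : ℝ := ∑' n : ℕ, (nseq n - cseq n) with hM
  have hmem : Ioo (0:ℝ) 1 ∈ 𝓝[<] (1:ℝ) := Ioo_mem_nhdsLT_of_mem ⟨one_pos, le_refl 1⟩
  have hup : Tendsto (fun r : ℝ => 1 + M / DD r) (𝓝[<] (1:ℝ)) (𝓝 1) := by
    have h0 : Tendsto (fun r : ℝ => M / DD r) (𝓝[<] (1:ℝ)) (𝓝 0) :=
      tendsto_const_nhds.div_atTop DD_atTop
    have h := (tendsto_const_nhds : Tendsto (fun _ : ℝ => (1:ℝ)) (𝓝[<] (1:ℝ)) (𝓝 1)).add h0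
    norm_num at h
    exact h
  apply tendsto_of_tendsto_of_tendsto_of_le_of_le' tendsto_const_nhds hup
  · filter_upwards [hmem] with r hr
    rw [f_eval hr.1 hr.2]
    rw [le_div_iff₀ (DD_pos hr.1 hr.2), one_mul]
    exact DD_le_NN hr.1.le hr.2
  · filter_upwards [hmem] with r hr
    have hD := DD_pos hr.1 hr.2
    rw [f_eval hr.1 hr.2, div_le_iff₀ hD]
    have he : (1 + M / DD r) * DD r = DD r + M := by field_simp
    rw [he]
    linarith [NN_sub_DD_le hr.1.le hr.2]

end CF3

theorem classical_f3 :
    StrictAntiOn (fun r : ℝ => r^2 * Ka (1/2) r / (Ka (1/2) r - Ea (1/2) r)) (Set.Ioo 0 1) ∧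
    Filter.Tendsto (fun r : ℝ => r^2 * Ka (1/2) r / (Ka (1/2) r - Ea (1/2) r))
      (nhdsWithin 0 (Set.Ioi 0)) (nhds 2) ∧
    Filter.Tendsto (fun r : ℝ => r^2 * Ka (1/2) r / (Ka (1/2) r - Ea (1/2) r))
      (nhdsWithin 1 (Set.Iio 1)) (nhds 1) :=
  ⟨CF3.part_mono, CF3.lim_zero, CF3.lim_one⟩
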